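/- Let S be an additively idempotent semiring with a zero element 0 and a unity 1, and let n ≥ 2. Then M_n(S) is subdirectly irreducible if and only if S is subdirectly irreducible. -/

import Mathlib

def IsCong {T : Type} (add mul : T → T → T) (r : T → T → Prop) : Prop :=
  Equivalence r ∧ (∀ a b c d, r a b → r c d → r (add a c) (add b d)) ∧
    (∀ a b c d, r a b → r c d → r (mul a c) (mul b d))

def SubIrr {T : Type} (add mul : T → T → T) : Prop :=
  ∃ r : T → T → Prop, IsCong add mul r ∧ r ≠ (· = ·) ∧
    ∀ s : T → T → Prop, IsCong add mul s → s ≠ (· = ·) → ∀ a b, r a b → s a b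

def CongSimple {T : Type} (add mul : T → T → T) : Prop :=
  (∃ a b : T, a ≠ b) ∧
    ∀ r : T → T → Prop, IsCong add mul r → r = (· = ·) ∨ r = fun _ _ => True

def IsSemiring {S : Type} (add mul : S → S → S) : Prop :=
  (∀ a b, add a b = add b a) ∧ (∀ a b c, add (add a b) c = add a (add b c)) ∧
    (∀ a b c, mul (mul a b) c = mul a (mul b c)) ∧
    (∀ a b c, mul a (add b c) = add (mul a b) (mul a c)) ∧
    (∀ a b c, mul (add a b) c = add (mul a c) (mul b c))

def finSum {S : Type} (add : S → S → S) : {n : ℕ} → (Fin (n + 1) → S) → S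
  | 0, f => f 0
  | _ + 1, f => add (finSum add fun i => f i.castSucc) (f (Fin.last _))

def matAdd {S : Type} (add : S → S → S) {n : ℕ} (A B : Fin n → Fin n → S) :
    Fin n → Fin n → S :=
  fun i j => add (A i j) (B i j)

def matMul {S : Type} (add mul : S → S → S) {n : ℕ}
    (A B : Fin (n + 1) → Fin (n + 1) → S) : Fin (n + 1) → Fin (n + 1) → S :=
  fun i j => finSum add fun k => mul (A i k) (B k j)

def AlmostIntegral {S : Type} (add mul : S → S → S) : Prop :=
  IsSemiring add mul ∧ (∀ a : S, add a a = a) ∧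
    ∀ a b : S, add (add (mul a b) (mul b a)) a = a

def IsZero {S : Type} (add mul : S → S → S) (z : S) : Prop :=
  ∀ x, mul z x = z ∧ mul x z = z ∧ add z x = x

def SepCond {S : Type} (mul : S → S → S) (z : S) (a b : S) : Prop :=
  (a ≠ z ∧ b = z) ∨ (∃ c, mul c a ≠ z ∧ mul c b = z) ∨
    (∃ d, mul a d ≠ z ∧ mul b d = z) ∨
    ∃ c d, mul (mul c a) d ≠ z ∧ mul (mul c b) d = z

def cell {S : Type} (z : S) {N : ℕ} (i j : Fin N) (a : S) : Fin N → Fin N → S :=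
  fun p q => if p = i ∧ q = j then a else z

lemma aux_finSum_rel {T : Type} (add' : T → T → T) (r : T → T → Prop)
    (hc : ∀ a b c d, r a b → r c d → r (add' a c) (add' b d)) :
    ∀ {n : ℕ} (f g : Fin (n + 1) → T), (∀ k, r (f k) (g k)) →
      r (finSum add' f) (finSum add' g)
  | 0, f, g, h => h 0
  | n + 1, f, g, h =>
    hc _ _ _ _ (aux_finSum_rel add' r hc _ _ fun k => h k.castSucc) (h (Fin.last _))

lemma aux_finSum_z {S : Type} (add : S → S → S) (z : S) (hza : ∀ x, add z x = x) :
    ∀ {n : ℕ} (f : Fin (n + 1) → S), (∀ k, f k = z) → finSum add f = z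
  | 0, f, h => h 0
  | n + 1, f, h => by
    show add (finSum add fun i => f i.castSucc) (f (Fin.last _)) = z
    rw [aux_finSum_z add z hza _ (fun k => h k.castSucc), h, hza]

lemma aux_finSum_single {S : Type} (add : S → S → S) (z : S)
    (hcomm : ∀ a b, add a b = add b a) (hza : ∀ x, add z x = x) :
    ∀ {n : ℕ} (f : Fin (n + 1) → S) (k0 : Fin (n + 1)),
      (∀ k, k ≠ k0 → f k = z) → finSum add f = f k0
  | 0, f, k0, _ => by
    show f 0 = f k0
    exact congrArg f (Fin.fin_one_eq_zero k0).symm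
  | n + 1, f, k0, h => by
    show add (finSum add fun i => f i.castSucc) (f (Fin.last _)) = f k0
    by_cases hk : k0 = Fin.last (n + 1)
    · rw [aux_finSum_z add z hza _ (fun k => h k.castSucc (by simp [hk, (Fin.castSucc_lt_last k).ne])), hza, hk]
    · obtain ⟨k0', rfl⟩ := Fin.exists_castSucc_eq.mpr hk
      rw [aux_finSum_single add z hcomm hza _ k0'
          (fun k hkk => h k.castSucc (by simpa [Fin.castSucc_inj] using hkk)),
        h (Fin.last _) (fun hh => hk hh.symm), hcomm, hza]

lemma aux_finSum_entry {S : Type} (add : S → S → S) :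
    ∀ {n N : ℕ} (F : Fin (n + 1) → Fin N → Fin N → S) (p q : Fin N),
      finSum (matAdd add) F p q = finSum add fun k => F k p q
  | 0, _, _, _, _ => rfl
  | n + 1, N, F, p, q => by
    show matAdd add (finSum (matAdd add) fun i => F i.castSucc) (F (Fin.last _)) p q = _
    show add ((finSum (matAdd add) fun i => F i.castSucc) p q) (F (Fin.last _) p q) = _
    rw [aux_finSum_entry add (fun i => F i.castSucc) p q]
    rfl

variable {S : Type}

lemma aux_cell_mul (add mul : S → S → S) (z : S)
    (hcomm : ∀ a b, add a b = add b a) (hza : ∀ x : S, add z x = x)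
    (hzl : ∀ x : S, mul z x = z) (hzr : ∀ x : S, mul x z = z)
    {N : ℕ} (i k j : Fin (N + 1)) (a b : S) :
    matMul add mul (cell z i k a) (cell z k j b) = cell z i j (mul a b) := by
  funext p q
  show finSum add (fun t => mul (cell z i k a p t) (cell z k j b t q))
      = cell z i j (mul a b) p q
  by_cases hp : p = i
  · by_cases hq : q = j
    · rw [aux_finSum_single add z hcomm hza _ k
        (fun t ht => by simp [cell, ht, hzl, hzr])]
      simp [cell, hp, hq]
    · rw [aux_finSum_z add z hza _ (fun t => ?_)]
      · simp [cell, hq]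
      · by_cases ht : t = k
        · simp [cell, ht, hq, hzr]
        · simp [cell, ht, hzl, hzr]
  · rw [aux_finSum_z add z hza _ (fun t => by simp [cell, hp, hzl])]
    simp [cell, hp]

lemma aux_mul_cellR (add mul : S → S → S) (z u : S)
    (hcomm : ∀ a b, add a b = add b a) (hza : ∀ x : S, add z x = x)
    (hzr : ∀ x : S, mul x z = z) (hur : ∀ x : S, mul x u = x)
    {N : ℕ} (j l : Fin (N + 1)) (A : Fin (N + 1) → Fin (N + 1) → S) :
    matMul add mul A (cell z j l u) = fun p q => if q = l then A p j else z := by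
  funext p q
  show finSum add (fun t => mul (A p t) (cell z j l u t q)) = _
  by_cases hq : q = l
  · rw [aux_finSum_single add z hcomm hza _ j
      (fun t ht => by simp [cell, ht, hzr])]
    simp [cell, hq, hur]
  · rw [aux_finSum_z add z hza _ (fun t => by simp [cell, hq, hzr])]
    simp [hq]

lemma aux_cellL_mul (add mul : S → S → S) (z u : S)
    (hcomm : ∀ a b, add a b = add b a) (hza : ∀ x : S, add z x = x)
    (hzl : ∀ x : S, mul z x = z) (hul : ∀ x : S, mul u x = x)
    {N : ℕ} (l i : Fin (N + 1)) (B : Fin (N + 1) → Fin (N + 1) → S) :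
    matMul add mul (cell z l i u) B = fun p q => if p = l then B i q else z := by
  funext p q
  show finSum add (fun t => mul (cell z l i u p t) (B t q)) = _
  by_cases hp : p = l
  · rw [aux_finSum_single add z hcomm hza _ i
      (fun t ht => by simp [cell, ht, hzl])]
    simp [cell, hp, hul]
  · rw [aux_finSum_z add z hza _ (fun t => by simp [cell, hp, hzl])]
    simp [hp]

lemma aux_decomp (add : S → S → S) (z : S)
    (hcomm : ∀ a b, add a b = add b a) (hza : ∀ x : S, add z x = x)
    {N : ℕ} (A : Fin (N + 1) → Fin (N + 1) → S) :
    finSum (matAdd add) (fun i => finSum (matAdd add) fun j => cell z i j (A i j)) = A := by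
  funext p q
  rw [aux_finSum_entry]
  have h1 : ∀ i : Fin (N + 1),
      (finSum (matAdd add) fun j => cell z i j (A i j)) p q
        = finSum add fun j => cell z i j (A i j) p q :=
    fun i => aux_finSum_entry add _ p q
  simp only [h1]
  rw [aux_finSum_single add z hcomm hza _ p (fun i hi => aux_finSum_z add z hza _
    (fun j => by simp [cell, Ne.symm hi]))]
  rw [aux_finSum_single add z hcomm hza _ q (fun j hj => by simp [cell, Ne.symm hj])]
  simp [cell]

/-- For an additively idempotent semiring with zero and unity, `M_n(S)` is
subdirectly irreducible iff `S` is, for any `n ≥ 2`. -/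
theorem stmt_6 {S : Type} (add mul : S → S → S) (hS : IsSemiring add mul)
    (hidem : ∀ a : S, add a a = a)
    (z : S) (hz : IsZero add mul z)
    (u : S) (hu : ∀ x : S, mul u x = x ∧ mul x u = x) :
    ∀ m : ℕ,
      (SubIrr (T := Fin (m + 2) → Fin (m + 2) → S) (matAdd add) (matMul add mul) ↔
        SubIrr add mul) := by
  intro m
  obtain ⟨hcomm, haa, hma, hdl, hdr⟩ := hS
  have hza : ∀ x, add z x = x := fun x => (hz x).2.2
  have hzl : ∀ x, mul z x = z := fun x => (hz x).1
  have hzr : ∀ x, mul x z = z := fun x => (hz x).2.1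
  have hul : ∀ x, mul u x = x := fun x => (hu x).1
  have hur : ∀ x, mul x u = x := fun x => (hu x).2
  -- embedding of S into the (0,0) corner
  have hc00inj : ∀ a b : S, cell z (0 : Fin (m + 2)) 0 a = cell z 0 0 b → a = b := by
    intro a b h
    have := congrFun (congrFun h 0) 0
    simpa [cell] using this
  have hc00add : ∀ a b : S,
      cell z (0 : Fin (m + 2)) 0 (add a b) = matAdd add (cell z 0 0 a) (cell z 0 0 b) := by
    intro a b
    funext p q
    by_cases h : p = 0 ∧ q = 0 <;> simp [cell, matAdd, h, hza z]
  have hc00mul : ∀ a b : S,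
      cell z (0 : Fin (m + 2)) 0 (mul a b) = matMul add mul (cell z 0 0 a) (cell z 0 0 b) :=
    fun a b => (aux_cell_mul add mul z hcomm hza hzl hzr 0 0 0 a b).symm
  -- Φ : congruences on S → congruences on matrices (entrywise)
  have hPhiCong : ∀ r : S → S → Prop, IsCong add mul r →
      IsCong (matAdd add) (matMul add mul)
        (fun A B : Fin (m + 2) → Fin (m + 2) → S => ∀ i j, r (A i j) (B i j)) := by
    intro r ⟨⟨hre, hrs, hrt⟩, hra, hrm⟩
    refine ⟨⟨fun A i j => hre _, fun h i j => hrs (h i j),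
      fun h1 h2 i j => hrt (h1 i j) (h2 i j)⟩, ?_, ?_⟩
    · intro A B C D h1 h2 i j
      exact hra _ _ _ _ (h1 i j) (h2 i j)
    · intro A B C D h1 h2 i j
      show r (finSum add fun k => mul (A i k) (C k j))
        (finSum add fun k => mul (B i k) (D k j))
      exact aux_finSum_rel add r hra _ _ fun k => hrm _ _ _ _ (h1 i k) (h2 k j)
  -- Ψ : congruences on matrices → congruences on S
  have hPsiCong : ∀ R : (Fin (m + 2) → Fin (m + 2) → S) → (Fin (m + 2) → Fin (m + 2) → S) → Prop, IsCong (matAdd add) (matMul add mul) R →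
      IsCong add mul (fun a b : S => R (cell z 0 0 a) (cell z 0 0 b)) := by
    intro R ⟨⟨hre, hrs, hrt⟩, hra, hrm⟩
    refine ⟨⟨fun a => hre _, fun h => hrs h, fun h1 h2 => hrt h1 h2⟩, ?_, ?_⟩
    · intro a b c d h1 h2
      show R (cell z 0 0 (add a c)) (cell z 0 0 (add b d))
      rw [hc00add, hc00add]
      exact hra _ _ _ _ h1 h2
    · intro a b c d h1 h2
      show R (cell z 0 0 (mul a c)) (cell z 0 0 (mul b d))
      rw [hc00mul, hc00mul]
      exact hrm _ _ _ _ h1 h2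
  -- Ψ ∘ Φ = id
  have hPhiPsi : ∀ r : S → S → Prop, IsCong add mul r → ∀ a b : S,
      (∀ i j, r (cell z (0 : Fin (m + 2)) 0 a i j) (cell z 0 0 b i j)) ↔ r a b := by
    intro r hr a b
    constructor
    · intro h
      have := h 0 0
      simpa [cell] using this
    · intro h i j
      by_cases hij : i = 0 ∧ j = 0
      · simpa [cell, hij] using h
      · simpa [cell, hij] using hr.1.refl z
  -- placing a corner value into an arbitrary cell
  have hcellc00 : ∀ (i j : Fin (m + 2)) (a : S),
      matMul add mul (cell z i 0 u) (matMul add mul (cell z 0 0 a) (cell z 0 j u))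
        = cell z i j a := by
    intro i j a
    rw [aux_cell_mul add mul z hcomm hza hzl hzr 0 0 j a u, hur a,
      aux_cell_mul add mul z hcomm hza hzl hzr i 0 j u a, hul a]
  -- extracting an entry into the corner
  have hextract : ∀ (A : Fin (m + 2) → Fin (m + 2) → S) (i j : Fin (m + 2)),
      matMul add mul (cell z 0 i u) (matMul add mul A (cell z j 0 u))
        = cell z 0 0 (A i j) := by
    intro A i j
    rw [aux_mul_cellR add mul z u hcomm hza hzr hur j 0 A,
      aux_cellL_mul add mul z u hcomm hza hzl hul 0 i
        (fun p q => if q = 0 then A p j else z)]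
    funext p q
    by_cases hp : p = 0 <;> by_cases hq : q = 0 <;> simp [cell, hp, hq]
  -- Φ ∘ Ψ = id
  have hPsiPhi : ∀ R : (Fin (m + 2) → Fin (m + 2) → S) → (Fin (m + 2) → Fin (m + 2) → S) → Prop, IsCong (matAdd add) (matMul add mul) R →
      ∀ A B : Fin (m + 2) → Fin (m + 2) → S,
      R A B ↔ ∀ i j, R (cell z 0 0 (A i j)) (cell z 0 0 (B i j)) := by
    intro R hR A B
    obtain ⟨hEq, hAdd, hMul⟩ := hR
    constructor
    · intro h i j
      have h1 : R (matMul add mul A (cell z j 0 u)) (matMul add mul B (cell z j 0 u)) :=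
        hMul _ _ _ _ h (hEq.refl _)
      have h2 := hMul _ _ _ _ (hEq.refl (cell z 0 i u)) h1
      rw [hextract A i j, hextract B i j] at h2
      exact h2
    · intro h
      have hcells : ∀ i j, R (cell z i j (A i j)) (cell z i j (B i j)) := by
        intro i j
        have h1 := hMul _ _ _ _ (h i j) (hEq.refl (cell z 0 j u))
        have h2 := hMul _ _ _ _ (hEq.refl (cell z i 0 u)) h1
        rw [hcellc00 i j (A i j), hcellc00 i j (B i j)] at h2
        exact h2
      rw [← aux_decomp add z hcomm hza A, ← aux_decomp add z hcomm hza B]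
      exact aux_finSum_rel (matAdd add) R hAdd _ _ fun i =>
        aux_finSum_rel (matAdd add) R hAdd _ _ fun j => hcells i j
  -- nontriviality transfers
  have hPhiNe : ∀ r : S → S → Prop, IsCong add mul r → r ≠ (· = ·) →
      (fun A B : Fin (m + 2) → Fin (m + 2) → S => ∀ i j, r (A i j) (B i j)) ≠ (· = ·) := by
    intro r hr hne hEq
    apply hne
    funext a b
    apply propext
    constructor
    · intro hab
      exact hc00inj a b ((congrFun (congrFun hEq (cell z 0 0 a)) (cell z 0 0 b)).mp
        ((hPhiPsi r hr a b).mpr hab))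
    · rintro rfl
      exact hr.1.refl a
  have hPsiNe : ∀ R : (Fin (m + 2) → Fin (m + 2) → S) → (Fin (m + 2) → Fin (m + 2) → S) → Prop, IsCong (matAdd add) (matMul add mul) R → R ≠ (· = ·) →
      (fun a b : S => R (cell z 0 0 a) (cell z 0 0 b)) ≠ (· = ·) := by
    intro R hR hne hEq
    apply hne
    funext A B
    apply propext
    constructor
    · intro hAB
      funext p q
      exact (congrFun (congrFun hEq (A p q)) (B p q)).mp ((hPsiPhi R hR A B).mp hAB p q)
    · rintro rfl
      exact hR.1.refl A
  constructor
  · rintro ⟨R, hRc, hRne, hRmin⟩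
    refine ⟨fun a b => R (cell z 0 0 a) (cell z 0 0 b), hPsiCong R hRc,
      hPsiNe R hRc hRne, ?_⟩
    intro s hsc hsne a b hab
    have hmin := hRmin _ (hPhiCong s hsc) (hPhiNe s hsc hsne) (cell z 0 0 a) (cell z 0 0 b) hab
    exact (hPhiPsi s hsc a b).mp hmin
  · rintro ⟨r, hrc, hrne, hrmin⟩
    refine ⟨fun A B => ∀ i j, r (A i j) (B i j), hPhiCong r hrc, hPhiNe r hrc hrne, ?_⟩
    intro R' hR'c hR'ne A B hAB
    have hmin := hrmin _ (hPsiCong R' hR'c) (hPsiNe R' hR'c hR'ne)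
    exact (hPsiPhi R' hR'c A B).mpr (fun i j => hmin _ _ (hAB i j))
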